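/- Let ξ be a nonnegative random variable, C₁, c, ε₀ > 0 with P(ξ ≤ ε) ≤ C₁ e^{-c(ln ε)²} for all 0 < ε ≤ ε₀. Fix κ > 0 and t₀ > e such that (ln t)^{2+κ} ≤ ε₀ t for all t ≥ t₀. Then for all t ≥ t₀: E[e^{-tξ}] ≤ C₁ e^{-c(ln t - (2+κ) ln ln t)²} + e^{-(ln t)^{2+κ}}. -/

import Mathlib

open Real MeasureTheory

theorem stmt_7 {Ω : Type*} [MeasureSpace Ω] (μ : Measure Ω) [IsProbabilityMeasure μ]
    (ξ : Ω → ℝ) (hmeas : Measurable ξ) (hnonneg : ∀ ω, 0 ≤ ξ ω)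
    (C₁ c ε₀ κ t₀ : ℝ) (hC₁ : 0 < C₁) (hc : 0 < c) (hε₀ : 0 < ε₀) (hκ : 0 < κ)
    (ht₀ : Real.exp 1 < t₀)
    (hup : ∀ ε : ℝ, 0 < ε → ε ≤ ε₀ →
      (μ {ω | ξ ω ≤ ε}).toReal ≤ C₁ * Real.exp (-c * (Real.log ε) ^ 2))
    (hlog : ∀ t : ℝ, t₀ ≤ t → (Real.log t) ^ (2 + κ) ≤ ε₀ * t) :
    ∀ t : ℝ, t₀ ≤ t →
      ∫ ω, Real.exp (-(t * ξ ω)) ∂μ ≤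
        C₁ * Real.exp (-c * (Real.log t - (2 + κ) * Real.log (Real.log t)) ^ 2) +
          Real.exp (-(Real.log t) ^ (2 + κ)) := by
  intro t ht
  have ht0pos : (0:ℝ) < t₀ := lt_trans (Real.exp_pos 1) ht₀
  have htpos : 0 < t := lt_of_lt_of_le ht0pos ht
  have hlogt : 1 < Real.log t := by
    have := Real.log_lt_log (Real.exp_pos 1) (lt_of_lt_of_le ht₀ ht)
    simpa [Real.log_exp] using this
  have hlogtpos : 0 < Real.log t := lt_trans one_pos hlogt
  set ε := (Real.log t) ^ (2 + κ) / t with hε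
  have hrpos : 0 < (Real.log t) ^ (2 + κ) := Real.rpow_pos_of_pos hlogtpos _
  have hεpos : 0 < ε := div_pos hrpos htpos
  have hεle : ε ≤ ε₀ := by
    rw [hε, div_le_iff₀ htpos]
    calc (Real.log t) ^ (2 + κ) ≤ ε₀ * t := hlog t ht
    _ = ε₀ * t := rfl
  have htε : t * ε = (Real.log t) ^ (2 + κ) := by
    rw [hε]; field_simp
  set S := {ω | ξ ω ≤ ε} with hSdef
  have hSmeas : MeasurableSet S := hmeas measurableSet_Iic
  have hpt : ∀ ω, Real.exp (-(t * ξ ω)) ≤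
      S.indicator (fun _ => (1:ℝ)) ω + Real.exp (-(t * ε)) := by
    intro ω
    by_cases h : ξ ω ≤ ε
    · have h1 : Real.exp (-(t * ξ ω)) ≤ 1 := by
        apply Real.exp_le_one_iff.mpr
        have := mul_nonneg htpos.le (hnonneg ω)
        linarith
      have h2 : S.indicator (fun _ => (1:ℝ)) ω = 1 := Set.indicator_of_mem (show ω ∈ S from h) _
      rw [h2]
      linarith [Real.exp_pos (-(t * ε))]
    · have h2 : Real.exp (-(t * ξ ω)) ≤ Real.exp (-(t * ε)) := by
        apply Real.exp_le_exp.mpr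
        push_neg at h
        nlinarith
      have h3 : S.indicator (fun _ => (1:ℝ)) ω = 0 := Set.indicator_of_notMem (show ω ∉ S from h) _
      rw [h3]; linarith
  have hint1 : Integrable (fun ω => Real.exp (-(t * ξ ω))) μ := by
    apply Integrable.mono' (integrable_const (1:ℝ))
    · exact (((hmeas.const_mul t).neg).exp).aestronglyMeasurable
    · filter_upwards with ω
      rw [Real.norm_eq_abs, abs_of_pos (Real.exp_pos _)]
      apply Real.exp_le_one_iff.mpr
      have := mul_nonneg htpos.le (hnonneg ω)
      linarith
  have hindint : Integrable (S.indicator (fun _ => (1:ℝ))) μ :=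
    (integrable_const (1:ℝ)).indicator hSmeas
  have hint2 : Integrable (fun ω => S.indicator (fun _ => (1:ℝ)) ω + Real.exp (-(t * ε))) μ :=
    hindint.add (integrable_const _)
  have hmono := integral_mono hint1 hint2 hpt
  rw [integral_add hindint (integrable_const _), integral_indicator_const,
    integral_const] at hmono
  · simp only [Measure.real, measure_univ, ENNReal.toReal_one, smul_eq_mul, mul_one, one_smul, one_mul] at hmono
    have hμ : (μ S).toReal ≤ C₁ * Real.exp (-c * (Real.log ε) ^ 2) := hup ε hεpos hεle
    have hlogε : Real.log ε = (2 + κ) * Real.log (Real.log t) - Real.log t := by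
      rw [hε, Real.log_div (ne_of_gt hrpos) (ne_of_gt htpos), Real.log_rpow hlogtpos]
    have hsq : (Real.log ε) ^ 2 =
        (Real.log t - (2 + κ) * Real.log (Real.log t)) ^ 2 := by
      rw [hlogε]; ring
    rw [hsq] at hμ
    calc ∫ ω, Real.exp (-(t * ξ ω)) ∂μ
        ≤ (μ S).toReal + Real.exp (-(t * ε)) := hmono
      _ ≤ C₁ * Real.exp (-c * (Real.log t - (2 + κ) * Real.log (Real.log t)) ^ 2) +
          Real.exp (-(Real.log t) ^ (2 + κ)) := by
          rw [htε] at *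
          exact add_le_add hμ le_rfl
  · exact hSmeas
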